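/- Let (g,B) be a non-Abelian solvable quadratic Lie algebra of dimension n (n ≥ 2). Then g is a one-dimensional double extension of a solvable quadratic Lie algebra of dimension n − 2: there exist a solvable quadratic Lie algebra (h, B_h) with dim(h) = n − 2 and a skew-symmetric derivation C of h such that g is i-isomorphic to the double extension of h by C, i.e. to the Lie algebra on h ⊕ ℂe ⊕ ℂf with bracket [X,Y] = [X,Y]_h + B_h(C(X),Y)·f, [e,X] = C(X), [f,·] = 0 for X,Y ∈ h, equipped with the form B̄ extending B_h by B̄(e,f)=1, B̄(e,e)=B̄(f,f)=B̄(e,h)=B̄(f,h)=0. -/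

import Mathlib

open Module

/-- A solvable quadratic Lie algebra: a finite-dimensional complex solvable Lie algebra
together with a symmetric, non-degenerate, invariant bilinear form. -/
structure SolvQuadLie where
  carrier : Type
  [lieRing : LieRing carrier]
  [lieAlgebra : LieAlgebra ℂ carrier]
  [finDim : FiniteDimensional ℂ carrier]
  form : LinearMap.BilinForm ℂ carrier
  symm : ∀ x y : carrier, form x y = form y x
  nondeg : form.Nondegenerate
  invariant : ∀ x y z : carrier, form ⁅x, y⁆ z = form x ⁅y, z⁆
  solvable : LieAlgebra.IsSolvable carrier

attribute [instance] SolvQuadLie.lieRing SolvQuadLie.lieAlgebra SolvQuadLie.finDim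

/-- The bracket of the double extension `h ⊕ ℂe ⊕ ℂf` of a quadratic Lie algebra
`(h, B)` by a skew-symmetric derivation `C`: an element `(x, a, c)` represents
`x + a·e + c·f`, and
`[x + a·e + c·f, y + a'·e + c'·f] = [x,y]_h + a·C(y) - a'·C(x) + B(C(x), y)·f`. -/
def deBracket (h : Type) [LieRing h] [LieAlgebra ℂ h]
    (B : LinearMap.BilinForm ℂ h) (C : h →ₗ[ℂ] h) :
    (h × ℂ × ℂ) → (h × ℂ × ℂ) → (h × ℂ × ℂ) :=
  fun u v => (⁅u.1, v.1⁆ + u.2.1 • C v.1 - v.2.1 • C u.1, 0, B (C u.1) v.1)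

/-- The bilinear form `B̄` of the double extension: it extends `B`, satisfies
`B̄(e, f) = 1` and vanishes on all other pairs involving `e` and `f`. -/
def deForm (h : Type) [AddCommGroup h] [Module ℂ h]
    (B : LinearMap.BilinForm ℂ h) : (h × ℂ × ℂ) → (h × ℂ × ℂ) → ℂ :=
  fun u v => B u.1 v.1 + u.2.1 * v.2.2 + u.2.2 * v.2.1

namespace DEAux

/-- Bundled data for the double-extension construction. -/
structure Setup (g : Type) [LieRing g] [LieAlgebra ℂ g] where
  B : LinearMap.BilinForm ℂ g
  e : g
  f : g
  hsymm : ∀ x y : g, B x y = B y x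
  hnd : B.Nondegenerate
  hinv : ∀ x y z : g, B ⁅x, y⁆ z = B x ⁅y, z⁆
  hee : B e e = 0
  hef : B e f = 1
  hff : B f f = 0
  hcent : ∀ x : g, ⁅x, f⁆ = 0

variable {g : Type} [LieRing g] [LieAlgebra ℂ g] (S : Setup g)

lemma Setup.hfe : S.B S.f S.e = 1 := by rw [S.hsymm]; exact S.hef

lemma Setup.hcent' (x : g) : ⁅S.f, x⁆ = 0 := by
  rw [← lie_skew, S.hcent, neg_zero]

/-- The orthogonal complement of the span of `e` and `f`. -/
def W : Submodule ℂ g := LinearMap.ker (S.B S.e) ⊓ LinearMap.ker (S.B S.f)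

lemma mem_W_iff {x : g} : x ∈ W S ↔ S.B S.e x = 0 ∧ S.B S.f x = 0 := by
  simp [W, Submodule.mem_inf]

/-- Projection onto `W` along `span {e, f}`. -/
def pi : g →ₗ[ℂ] g :=
  LinearMap.id - (S.B S.f).smulRight S.e - (S.B S.e).smulRight S.f

lemma pi_apply (x : g) : pi S x = x - S.B S.f x • S.e - S.B S.e x • S.f := rfl

lemma pi_mem (x : g) : pi S x ∈ W S := by
  rw [mem_W_iff]
  constructor <;>
    simp [pi_apply, S.hee, S.hef, S.hfe, S.hff, mul_comm]

lemma pi_of_mem {x : g} (hx : x ∈ W S) : pi S x = x := by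
  rw [mem_W_iff] at hx
  simp [pi_apply, hx.1, hx.2]

lemma decomp (x : g) : x = pi S x + S.B S.f x • S.e + S.B S.e x • S.f := by
  simp only [pi_apply]
  abel

lemma Bf_lie (x y : g) : S.B S.f ⁅x, y⁆ = 0 := by
  rw [S.hsymm, S.hinv, S.hcent, LinearMap.map_zero]

lemma Be_lie_e (x : g) : S.B S.e ⁅S.e, x⁆ = 0 := by
  have h : S.B ⁅S.e, x⁆ S.e = S.B S.e ⁅x, S.e⁆ := S.hinv _ _ _
  have h1 : S.B S.e ⁅x, S.e⁆ = -(S.B S.e ⁅S.e, x⁆) := by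
    rw [← lie_skew, map_neg]
  have h2 : S.B S.e ⁅S.e, x⁆ = S.B ⁅S.e, x⁆ S.e := S.hsymm _ _
  have key : S.B S.e ⁅S.e, x⁆ = -(S.B S.e ⁅S.e, x⁆) := h2.trans (h.trans h1)
  linear_combination key / 2

lemma lie_e_mem (x : g) : ⁅S.e, x⁆ ∈ W S := by
  rw [mem_W_iff]
  exact ⟨Be_lie_e S x, Bf_lie S _ _⟩

lemma pi_lie (x y : g) : pi S ⁅x, y⁆ = ⁅x, y⁆ - S.B S.e ⁅x, y⁆ • S.f := by
  rw [pi_apply, Bf_lie, zero_smul, sub_zero]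

lemma lie_pi_lie_left (x y z : g) : ⁅pi S ⁅x, y⁆, z⁆ = ⁅⁅x, y⁆, z⁆ := by
  rw [pi_lie, sub_lie, smul_lie, S.hcent', smul_zero, sub_zero]

lemma lie_pi_lie_right (x y z : g) : ⁅z, pi S ⁅x, y⁆⁆ = ⁅z, ⁅x, y⁆⁆ := by
  rw [pi_lie, lie_sub, lie_smul, S.hcent, smul_zero, sub_zero]


/-- The bracket on `W`: project the ambient bracket back to `W`. -/
def wbr (x y : W S) : W S := ⟨pi S ⁅(x : g), (y : g)⁆, pi_mem S _⟩

instance wLieRing : LieRing (W S) :=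
  { (inferInstance : AddCommGroup (W S)) with
    bracket := wbr S
    add_lie := fun x y z => by
      apply Subtype.ext
      show pi S ⁅(x : g) + y, (z : g)⁆ = pi S ⁅(x : g), z⁆ + pi S ⁅(y : g), z⁆
      rw [add_lie, map_add]
    lie_add := fun x y z => by
      apply Subtype.ext
      show pi S ⁅(x : g), (y : g) + z⁆ = pi S ⁅(x : g), y⁆ + pi S ⁅(x : g), z⁆
      rw [lie_add, map_add]
    lie_self := fun x => by
      apply Subtype.ext
      show pi S ⁅(x : g), (x : g)⁆ = 0
      rw [lie_self, map_zero]
    leibniz_lie := fun x y z => by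
      apply Subtype.ext
      show pi S ⁅(x : g), pi S ⁅(y : g), z⁆⁆ =
        pi S ⁅pi S ⁅(x : g), y⁆, (z : g)⁆ + pi S ⁅(y : g), pi S ⁅(x : g), z⁆⁆
      rw [lie_pi_lie_right, lie_pi_lie_left, lie_pi_lie_right, ← map_add, leibniz_lie] }

lemma wbr_def (x y : W S) : (⁅x, y⁆ : W S) = ⟨pi S ⁅(x : g), (y : g)⁆, pi_mem S _⟩ := rfl

lemma wbr_coe (x y : W S) : ((⁅x, y⁆ : W S) : g) = pi S ⁅(x : g), (y : g)⁆ := rfl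

instance wLieAlgebra : LieAlgebra ℂ (W S) :=
  { (inferInstance : Module ℂ (W S)) with
    lie_smul := fun t x y => by
      apply Subtype.ext
      show pi S ⁅(x : g), t • (y : g)⁆ = t • pi S ⁅(x : g), (y : g)⁆
      rw [lie_smul, map_smul] }

/-- The restricted bilinear form on `W`. -/
def wform : LinearMap.BilinForm ℂ (W S) :=
  LinearMap.compl₁₂ S.B (W S).subtype (W S).subtype

lemma wform_apply (x y : W S) : wform S x y = S.B (x : g) (y : g) := rfl

lemma wform_symm (x y : W S) : wform S x y = wform S y x := S.hsymm _ _

lemma wform_nondeg : (wform S).Nondegenerate := by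
  have hL : ∀ x : W S, (∀ y, wform S x y = 0) → x = 0 := by
    intro x hx
    apply Subtype.ext
    apply S.hnd.1
    intro y
    have hy := decomp S y
    have h1 : S.B (x : g) S.e = 0 := by
      rw [S.hsymm]; exact ((mem_W_iff S).mp x.2).1
    have h2 : S.B (x : g) S.f = 0 := by
      rw [S.hsymm]; exact ((mem_W_iff S).mp x.2).2
    have h3 : S.B (x : g) (pi S y) = 0 := hx ⟨pi S y, pi_mem S y⟩
    rw [hy]
    simp only [map_add, map_smul, h1, h2, h3, smul_eq_mul, mul_zero, add_zero, zero_add]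
  exact ⟨hL, fun x hx => hL x (fun y => by rw [wform_symm]; exact hx y)⟩

lemma wform_invariant (x y z : W S) : wform S ⁅x, y⁆ z = wform S x ⁅y, z⁆ := by
  have hz : S.B S.f (z : g) = 0 := ((mem_W_iff S).mp z.2).2
  have hx : S.B (x : g) S.f = 0 := by rw [S.hsymm]; exact ((mem_W_iff S).mp x.2).2
  show S.B (pi S ⁅(x : g), (y : g)⁆) (z : g) = S.B (x : g) (pi S ⁅(y : g), (z : g)⁆)
  simp only [pi_lie, map_sub, LinearMap.sub_apply, map_smul, LinearMap.smul_apply,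
    hz, hx, smul_zero, sub_zero]
  exact S.hinv _ _ _

/-- The derivation `C = ad(e)` restricted to `W`. -/
def wC : W S →ₗ[ℂ] W S :=
  LinearMap.codRestrict (W S) ((LieAlgebra.ad ℂ g S.e).comp (W S).subtype)
    (fun x => lie_e_mem S (x : g))

lemma wC_coe (x : W S) : ((wC S x : W S) : g) = ⁅S.e, (x : g)⁆ := rfl

lemma wC_deriv (x y : W S) : wC S ⁅x, y⁆ = ⁅wC S x, y⁆ + ⁅x, wC S y⁆ := by
  apply Subtype.ext
  show ⁅S.e, pi S ⁅(x : g), (y : g)⁆⁆ =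
    pi S ⁅⁅S.e, (x : g)⁆, (y : g)⁆ + pi S ⁅(x : g), ⁅S.e, (y : g)⁆⁆
  rw [lie_pi_lie_right, ← map_add, ← leibniz_lie]
  exact (pi_of_mem S (lie_e_mem S _)).symm

lemma wC_skew (x y : W S) : wform S (wC S x) y = -(wform S x (wC S y)) := by
  have h2 : S.B (x : g) ⁅S.e, (y : g)⁆ = S.B ⁅(x : g), S.e⁆ (y : g) := (S.hinv _ _ _).symm
  have h3 : (⁅(x : g), S.e⁆ : g) = -⁅S.e, (x : g)⁆ := (lie_skew _ _).symm
  rw [wform_apply, wform_apply, wC_coe, wC_coe, h2, h3, LinearMap.map_neg,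
    LinearMap.neg_apply, neg_neg]


lemma pi_e : pi S S.e = 0 := by
  simp [pi_apply, Setup.hfe, S.hee]

lemma pi_f : pi S S.f = 0 := by
  simp [pi_apply, S.hff, S.hef]

/-- The linear equivalence `g ≃ W × ℂ × ℂ`. -/
noncomputable def A : g ≃ₗ[ℂ] (W S) × ℂ × ℂ where
  toFun x := (⟨pi S x, pi_mem S x⟩, S.B S.f x, S.B S.e x)
  map_add' x y := by
    refine Prod.ext (Subtype.ext ?_) (Prod.ext ?_ ?_) <;> simp
  map_smul' t x := by
    refine Prod.ext (Subtype.ext ?_) (Prod.ext ?_ ?_) <;> simp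
  invFun p := (p.1 : g) + p.2.1 • S.e + p.2.2 • S.f
  left_inv x := by
    simp only
    exact (decomp S x).symm
  right_inv p := by
    obtain ⟨w, a, c⟩ := p
    have hw1 : S.B S.e (w : g) = 0 := ((mem_W_iff S).mp w.2).1
    have hw2 : S.B S.f (w : g) = 0 := ((mem_W_iff S).mp w.2).2
    refine Prod.ext (Subtype.ext ?_) (Prod.ext ?_ ?_)
    · show pi S ((w : g) + a • S.e + c • S.f) = (w : g)
      rw [map_add, map_add, map_smul, map_smul, pi_e, pi_f, smul_zero, smul_zero,
        add_zero, add_zero, pi_of_mem S w.2]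
    · show S.B S.f ((w : g) + a • S.e + c • S.f) = a
      simp [hw2, Setup.hfe, S.hff]
    · show S.B S.e ((w : g) + a • S.e + c • S.f) = c
      simp [hw1, S.hee, S.hef]

lemma finrank_eq [FiniteDimensional ℂ g] : finrank ℂ g = finrank ℂ (W S) + 2 := by
  rw [LinearEquiv.finrank_eq (A S), Module.finrank_prod, Module.finrank_prod,
    Module.finrank_self]

/-- The kernel of `B f` is a Lie ideal. -/
def FI : LieIdeal ℂ g :=
  { LinearMap.ker (S.B S.f) with
    lie_mem := fun {x m} _ => by
      show ⁅x, m⁆ ∈ LinearMap.ker (S.B S.f)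
      rw [LinearMap.mem_ker]
      exact Bf_lie S x m }

lemma mem_FI_iff {x : g} : x ∈ FI S ↔ S.B S.f x = 0 := Iff.rfl

lemma lie_pi_pi {u v : g} (hu : S.B S.f u = 0) (hv : S.B S.f v = 0) :
    ⁅pi S u, pi S v⁆ = ⁅u, v⁆ := by
  simp only [pi_apply, hu, hv, zero_smul, sub_zero, sub_lie, lie_sub, smul_lie,
    lie_smul, S.hcent, S.hcent', smul_zero, lie_zero, zero_lie, zero_sub, neg_zero]

/-- The projection from the ideal `ker (B f)` to `W`, a surjective Lie algebra map. -/
def psi : (FI S) →ₗ⁅ℂ⁆ (W S) where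
  toFun x := ⟨pi S (x : g), pi_mem S _⟩
  map_add' x y := by apply Subtype.ext; simp
  map_smul' t x := by apply Subtype.ext; simp
  map_lie' {x y} := by
    apply Subtype.ext
    show pi S ⁅(x : g), (y : g)⁆ = pi S ⁅pi S (x : g), pi S (y : g)⁆
    rw [lie_pi_pi S x.2 y.2]

lemma psi_surjective : Function.Surjective (psi S) := by
  intro w
  refine ⟨⟨(w : g), ((mem_W_iff S).mp w.2).2⟩, ?_⟩
  apply Subtype.ext
  show pi S (w : g) = (w : g)
  exact pi_of_mem S w.2

lemma wSolvable [LieAlgebra.IsSolvable g] : LieAlgebra.IsSolvable (W S) := by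
  haveI : LieAlgebra.IsSolvable (FI S) :=
    (LieIdeal.incl_injective (FI S)).lieAlgebra_isSolvable
  exact (psi_surjective S).lieAlgebra_isSolvable

lemma lie_decomp (x y : g) :
    ⁅x, y⁆ = ⁅pi S x, pi S y⁆ + S.B S.f x • ⁅S.e, pi S y⁆ - S.B S.f y • ⁅S.e, pi S x⁆ := by
  conv_lhs => rw [decomp S x, decomp S y]
  simp only [add_lie, lie_add, smul_lie, lie_smul, lie_self, smul_zero, add_zero,
    S.hcent, S.hcent', zero_add, smul_smul, zero_lie, lie_zero]
  rw [show ⁅pi S x, S.e⁆ = -⁅S.e, pi S x⁆ from (lie_skew _ _).symm]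
  module


lemma A_bracket (x y : g) :
    A S ⁅x, y⁆ = deBracket (W S) (wform S) (wC S) (A S x) (A S y) := by
  refine Prod.ext (Subtype.ext ?_) (Prod.ext ?_ ?_)
  · show pi S ⁅x, y⁆ =
      ((⁅(⟨pi S x, pi_mem S x⟩ : W S), (⟨pi S y, pi_mem S y⟩ : W S)⁆
        + S.B S.f x • wC S ⟨pi S y, pi_mem S y⟩
        - S.B S.f y • wC S ⟨pi S x, pi_mem S x⟩ : W S) : g)
    have hco : ((⁅(⟨pi S x, pi_mem S x⟩ : W S), (⟨pi S y, pi_mem S y⟩ : W S)⁆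
        + S.B S.f x • wC S ⟨pi S y, pi_mem S y⟩
        - S.B S.f y • wC S ⟨pi S x, pi_mem S x⟩ : W S) : g)
        = pi S ⁅pi S x, pi S y⁆ + S.B S.f x • ⁅S.e, pi S y⁆
          - S.B S.f y • ⁅S.e, pi S x⁆ := rfl
    rw [hco]
    conv_lhs => rw [lie_decomp S x y]
    rw [map_sub, map_add, map_smul, map_smul, pi_of_mem S (lie_e_mem S _),
      pi_of_mem S (lie_e_mem S _)]
  · exact Bf_lie S x y
  · show S.B S.e ⁅x, y⁆ = S.B ⁅S.e, pi S x⁆ (pi S y)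
    conv_lhs => rw [lie_decomp S x y]
    rw [map_sub, map_add, map_smul, map_smul, Be_lie_e, Be_lie_e, smul_zero,
      smul_zero, add_zero, sub_zero]
    exact (S.hinv _ _ _).symm

lemma A_form (x y : g) :
    deForm (W S) (wform S) (A S x) (A S y) = S.B x y := by
  have h1 : S.B (pi S x) S.e = 0 := by rw [S.hsymm]; exact ((mem_W_iff S).mp (pi_mem S x)).1
  have h2 : S.B (pi S x) S.f = 0 := by rw [S.hsymm]; exact ((mem_W_iff S).mp (pi_mem S x)).2
  have h3 : S.B S.e (pi S y) = 0 := ((mem_W_iff S).mp (pi_mem S y)).1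
  have h4 : S.B S.f (pi S y) = 0 := ((mem_W_iff S).mp (pi_mem S y)).2
  show S.B (pi S x) (pi S y) + S.B S.f x * S.B S.e y + S.B S.e x * S.B S.f y = S.B x y
  conv_rhs => rw [decomp S x, decomp S y]
  simp only [map_add, map_smul, LinearMap.add_apply, LinearMap.smul_apply, smul_eq_mul,
    h1, h2, h3, h4, S.hee, S.hef, Setup.hfe, S.hff]
  ring

section Central

variable {g : Type} [LieRing g] [LieAlgebra ℂ g] [FiniteDimensional ℂ g]

lemma exists_central_isotropic (B : LinearMap.BilinForm ℂ g)
    (hsymm : ∀ x y : g, B x y = B y x) (hnd : B.Nondegenerate)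
    (hinv : ∀ x y z : g, B ⁅x, y⁆ z = B x ⁅y, z⁆)
    (hsolv : LieAlgebra.IsSolvable g) (hnonab : ¬ IsLieAbelian g) :
    ∃ f : g, f ≠ 0 ∧ (∀ x : g, ⁅x, f⁆ = 0) ∧ B f f = 0 := by
  classical
  set D : LieIdeal ℂ g := LieAlgebra.derivedSeries ℂ g 1 with hD
  set Ds : Submodule ℂ g := LieSubmodule.toSubmodule D with hDs
  set Z : LieIdeal ℂ g := LieAlgebra.center ℂ g with hZ
  have hrefl : B.IsRefl := fun x y h => by rw [hsymm]; exact h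
  have hDtop : D = ⁅(⊤ : LieIdeal ℂ g), (⊤ : LieIdeal ℂ g)⁆ := by
    rw [hD, LieAlgebra.derivedSeries_def, LieAlgebra.derivedSeriesOfIdeal_succ,
      LieAlgebra.derivedSeriesOfIdeal_zero]
  have hmemD : ∀ x y : g, ⁅x, y⁆ ∈ D := fun x y => by
    rw [hDtop]
    exact LieSubmodule.lie_mem_lie (LieSubmodule.mem_top x) (LieSubmodule.mem_top y)
  have hZorth : ∀ z : g, z ∈ B.orthogonal Ds ↔ z ∈ Z := by
    intro z
    constructor
    · intro h
      rw [hZ]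
      rw [LieModule.mem_maxTrivSubmodule]
      intro x
      have hzx : ⁅z, x⁆ = 0 := by
        apply hnd.1
        intro y
        have h1 : B ⁅z, x⁆ y = B z ⁅x, y⁆ := hinv _ _ _
        rw [h1, hsymm]
        exact h _ (hmemD x y)
      rw [← lie_skew, hzx, neg_zero]
    · intro h
      intro n hn
      have hker : Ds ≤ LinearMap.ker (B.flip z) := by
        rw [hDs, hDtop, LieSubmodule.lieIdeal_oper_eq_linear_span, Submodule.span_le]
        rintro m ⟨x, y, rfl⟩
        rw [SetLike.mem_coe, LinearMap.mem_ker]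
        show B ⁅(x : g), (y : g)⁆ z = 0
        rw [hinv]
        rw [hZ, LieModule.mem_maxTrivSubmodule] at h
        rw [h (y : g), LinearMap.map_zero]
      exact hker hn
  have key : ∃ f : g, f ≠ 0 ∧ f ∈ Z ∧ f ∈ Ds := by
    by_contra hcon
    push_neg at hcon
    have hdisj : Disjoint Ds (B.orthogonal Ds) := by
      rw [Submodule.disjoint_def]
      intro x hx1 hx2
      by_contra hx0
      exact hcon x hx0 ((hZorth x).mp hx2) hx1
    have hcompl : IsCompl Ds (B.orthogonal Ds) :=
      (LinearMap.BilinForm.isCompl_orthogonal_iff_disjoint hrefl).mpr hdisj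
    have hsup : Ds ⊔ B.orthogonal Ds = ⊤ := hcompl.sup_eq_top
    have hle : B.orthogonal Ds ≤ LieSubmodule.toSubmodule Z := fun z hz => (hZorth z).mp hz
    have hsupZ : Ds ⊔ LieSubmodule.toSubmodule Z = ⊤ := by
      rw [eq_top_iff, ← hsup]
      exact sup_le_sup_left hle Ds
    have hsup' : D ⊔ Z = ⊤ := by
      rw [eq_top_iff]
      intro x _
      rw [LieSubmodule.mem_sup]
      have hx : x ∈ Ds ⊔ LieSubmodule.toSubmodule Z := by rw [hsupZ]; trivial
      obtain ⟨y, hy, z, hz, hyz⟩ := Submodule.mem_sup.mp hx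
      exact ⟨y, hy, z, hz, hyz⟩
    have hZlie : ∀ N : LieIdeal ℂ g, ⁅Z, N⁆ = ⊥ := by
      intro N
      rw [LieSubmodule.lie_eq_bot_iff]
      intro x hx m _
      rw [hZ, LieModule.mem_maxTrivSubmodule] at hx
      rw [← lie_skew, hx, neg_zero]
    have hlieZ : ∀ N : LieIdeal ℂ g, ⁅N, Z⁆ = ⊥ := by
      intro N
      rw [LieSubmodule.lie_eq_bot_iff]
      intro x _ m hm
      rw [hZ, LieModule.mem_maxTrivSubmodule] at hm
      exact hm x
    have hDD : D = ⁅D, D⁆ := by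
      conv_lhs => rw [hDtop, ← hsup']
      rw [LieSubmodule.sup_lie, LieSubmodule.lie_sup, LieSubmodule.lie_sup,
        hZlie, hlieZ, hZlie]
      simp
    have hstab : ∀ k, LieAlgebra.derivedSeriesOfIdeal ℂ g k D = D := by
      intro k
      induction k with
      | zero => exact LieAlgebra.derivedSeriesOfIdeal_zero ℂ g D
      | succ k ih =>
        rw [LieAlgebra.derivedSeriesOfIdeal_succ, ih, ← hDD]
    obtain ⟨k, hk⟩ : ∃ k, LieAlgebra.derivedSeries ℂ g k = ⊥ := (LieAlgebra.isSolvable_iff (R := ℂ) (L := g)).mp hsolv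
    have hbot : D = ⊥ := by
      have h1 : LieAlgebra.derivedSeries ℂ g (k + 1) = ⊥ := by
        rw [eq_bot_iff, ← hk]
        exact LieAlgebra.derivedSeriesOfIdeal_succ_le ⊤ k
      rw [LieAlgebra.derivedSeries_def, LieAlgebra.derivedSeriesOfIdeal_add (⊤ : LieIdeal ℂ g) k 1,
        ← LieAlgebra.derivedSeries_def, ← hD, hstab k] at h1
      exact h1
    apply hnonab
    constructor
    intro x y
    have := hmemD x y
    rw [hbot] at this
    exact (LieSubmodule.mem_bot _).mp this
  obtain ⟨f, hf0, hfZ, hfD⟩ := key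
  refine ⟨f, hf0, ?_, ?_⟩
  · rw [hZ, LieModule.mem_maxTrivSubmodule] at hfZ
    exact hfZ
  · have : f ∈ B.orthogonal Ds := (hZorth f).mpr hfZ
    exact this f hfD

end Central

end DEAux

/-- Let `(g, B)` be a non-Abelian solvable quadratic Lie algebra of dimension `n ≥ 2`.
Then `g` is a one-dimensional double extension of a solvable quadratic Lie algebra of
dimension `n - 2`: there exist a solvable quadratic Lie algebra `(h, B_h)` of dimension
`n - 2` and a skew-symmetric derivation `C` of `h` such that `g` is i-isomorphic to the
double extension of `h` by `C`. -/
theorem solvable_quadratic_is_double_extension (n : ℕ) (hn : 2 ≤ n)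
    (g : Type) [LieRing g] [LieAlgebra ℂ g] [FiniteDimensional ℂ g]
    (B : LinearMap.BilinForm ℂ g)
    (hsymm : ∀ x y : g, B x y = B y x)
    (hnd : B.Nondegenerate)
    (hinv : ∀ x y z : g, B ⁅x, y⁆ z = B x ⁅y, z⁆)
    (hsolv : LieAlgebra.IsSolvable g)
    (hnonab : ¬ IsLieAbelian g)
    (hdim : finrank ℂ g = n) :
    ∃ (H : SolvQuadLie) (C : H.carrier →ₗ[ℂ] H.carrier),
      finrank ℂ H.carrier = n - 2 ∧
      (∀ x y : H.carrier, C ⁅x, y⁆ = ⁅C x, y⁆ + ⁅x, C y⁆) ∧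
      (∀ x y : H.carrier, H.form (C x) y = -(H.form x (C y))) ∧
      ∃ A : g ≃ₗ[ℂ] H.carrier × ℂ × ℂ,
        (∀ x y : g, A ⁅x, y⁆ = deBracket H.carrier H.form C (A x) (A y)) ∧
        (∀ x y : g, deForm H.carrier H.form (A x) (A y) = B x y) := by
  haveI := hsolv
  obtain ⟨f0, hf0, hcent, hff⟩ := DEAux.exists_central_isotropic B hsymm hnd hinv hsolv hnonab
  have hex : ∃ y : g, B f0 y ≠ 0 := by
    by_contra hcon
    push_neg at hcon
    exact hf0 (hnd.1 f0 hcon)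
  obtain ⟨y, hy⟩ := hex
  obtain ⟨e1, he1⟩ : ∃ e1 : g, e1 = (B f0 y)⁻¹ • y := ⟨_, rfl⟩
  have he1f : B e1 f0 = 1 := by
    rw [he1, map_smul, LinearMap.smul_apply, smul_eq_mul, hsymm y f0, inv_mul_cancel₀ hy]
  obtain ⟨e, he⟩ : ∃ e : g, e = e1 - (B e1 e1 / 2) • f0 := ⟨_, rfl⟩
  have hfe1 : B f0 e1 = 1 := by rw [hsymm]; exact he1f
  have hef : B e f0 = 1 := by
    rw [he, map_sub, LinearMap.sub_apply, map_smul, LinearMap.smul_apply, smul_eq_mul,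
      he1f, hff, mul_zero, sub_zero]
  have hee : B e e = 0 := by
    rw [he]
    simp only [map_sub, map_smul, LinearMap.sub_apply, LinearMap.smul_apply, smul_eq_mul,
      he1f, hfe1, hff]
    ring
  set S : DEAux.Setup g := ⟨B, e, f0, hsymm, hnd, hinv, hee, hef, hff, hcent⟩ with hS
  refine ⟨SolvQuadLie.mk (↥(DEAux.W S)) (lieRing := DEAux.wLieRing S)
      (lieAlgebra := DEAux.wLieAlgebra S) (finDim := inferInstance)
      (DEAux.wform S) (DEAux.wform_symm S) (DEAux.wform_nondeg S)
      (DEAux.wform_invariant S) (DEAux.wSolvable S),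
    DEAux.wC S, ?_, DEAux.wC_deriv S, DEAux.wC_skew S, DEAux.A S,
    DEAux.A_bracket S, DEAux.A_form S⟩
  have h2 := DEAux.finrank_eq S
  show finrank ℂ ↥(DEAux.W S) = n - 2
  omega
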